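/- Suppose y ∈ L²_loc(0,∞) with distributional derivative y_t ∈ L²_loc(0,∞), and K is a strongly positive kernel with constant η > 0 (meaning ∫₀^t (K∗v)(s)v(s) ds ≥ η ∫₀^t (e^{-·}∗v)(s)v(s) ds for all admissible v and t). Then for all t > 0: ∫₀^t |y(s)|² ds ≤ |y(0)|² + 2η^{-1} ∫₀^t (K∗y)(s) y(s) ds + 2η^{-1} ∫₀^t (K∗y_t)(s) y_t(s) ds. -/

import Mathlib

open MeasureTheory

/-- The Laplace convolution `(K ∗ y)(t) = ∫₀^t K(s) y(t - s) ds`. -/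
noncomputable def lconv (K y : ℝ → ℝ) (t : ℝ) : ℝ :=
  ∫ s in (0:ℝ)..t, K s * y (t - s)

/-- If `K` is strongly positive with constant `η` and `y` has derivative `y'`, both locally
square integrable, then the memory quadratic forms control the `L²` norm of `y`:
`∫₀^t y² ds ≤ y(0)² + 2η⁻¹ ∫₀^t (K∗y) y ds + 2η⁻¹ ∫₀^t (K∗y') y' ds`. -/
theorem memory_L2_control (K : ℝ → ℝ) (η : ℝ) (hη : 0 < η)
    (hKloc : LocallyIntegrableOn K (Set.Ioi 0))
    (hstrong : ∀ (v : ℝ → ℝ) (t : ℝ), 0 < t →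
      η * ∫ s in (0:ℝ)..t, lconv (fun r => Real.exp (-r)) v s * v s
        ≤ ∫ s in (0:ℝ)..t, lconv K v s * v s)
    (y y' : ℝ → ℝ) (hy : ∀ s, HasDerivAt y (y' s) s)
    (hy2 : ∀ t > (0:ℝ), MemLp y 2 (volume.restrict (Set.Ioc 0 t)))
    (hy'2 : ∀ t > (0:ℝ), MemLp y' 2 (volume.restrict (Set.Ioc 0 t))) :
    ∀ t > (0:ℝ),
      ∫ s in (0:ℝ)..t, (y s) ^ 2
        ≤ (y 0) ^ 2 + 2 * η⁻¹ * (∫ s in (0:ℝ)..t, lconv K y s * y s)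
          + 2 * η⁻¹ * (∫ s in (0:ℝ)..t, lconv K y' s * y' s) := by
  intro t ht
  have hycont : Continuous y := by
    rw [continuous_iff_continuousAt]; exact fun s => (hy s).continuousAt
  set F : ℝ → ℝ := fun s => ∫ u in (0:ℝ)..s, Real.exp u * y u with hF_def
  set w : ℝ → ℝ := fun s => Real.exp (-s) * F s with hw_def
  set z : ℝ → ℝ := fun s => y s - Real.exp (-s) * y 0 - w s with hz_def
  have hF : ∀ s, HasDerivAt F (Real.exp s * y s) s := fun s =>
    ((Real.continuous_exp.mul hycont).integral_hasStrictDerivAt 0 s).hasDerivAt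
  have hexpneg : ∀ s : ℝ, HasDerivAt (fun r => Real.exp (-r)) (-Real.exp (-s)) s := by
    intro s
    have h := (Real.hasDerivAt_exp (-s)).comp s (hasDerivAt_neg s)
    exact h.congr_deriv (by ring)
  have hw : ∀ s, HasDerivAt w (y s - w s) s := by
    intro s
    have h := (hexpneg s).mul (hF s)
    have he : Real.exp (-s) * Real.exp s = 1 := by
      rw [← Real.exp_add]; simp
    refine h.congr_deriv ?_
    simp only [hw_def]
    linear_combination (y s) * he
  have hz : ∀ s, HasDerivAt z (y' s - z s) s := by
    intro s
    have h := ((hy s).sub ((hexpneg s).mul_const (y 0))).sub (hw s)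
    refine h.congr_deriv ?_
    simp only [hz_def]; ring
  have hwcont : Continuous w := by
    rw [continuous_iff_continuousAt]; exact fun s => (hw s).continuousAt
  have hzcont : Continuous z := by
    rw [continuous_iff_continuousAt]; exact fun s => (hz s).continuousAt
  have hw0 : w 0 = 0 := by simp [hw_def, hF_def]
  have hz0 : z 0 = 0 := by simp [hz_def, hw0]
  -- identity: lconv e y = w
  have hconv : ∀ (v : ℝ → ℝ) (s : ℝ), lconv (fun r => Real.exp (-r)) v s
      = Real.exp (-s) * ∫ u in (0:ℝ)..s, Real.exp u * v u := by
    intro v s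
    unfold lconv
    have h1 : (∫ r in (0:ℝ)..s, Real.exp (-r) * v (s - r))
        = ∫ r in (0:ℝ)..s, (fun u => Real.exp (-(s - u)) * v u) (s - r) := by
      apply intervalIntegral.integral_congr
      intro r _
      simp only []
      ring_nf
    rw [h1, intervalIntegral.integral_comp_sub_left (fun u => Real.exp (-(s - u)) * v u) s]
    simp only [sub_self, sub_zero]
    rw [← intervalIntegral.integral_const_mul]
    apply intervalIntegral.integral_congr
    intro u _
    show Real.exp (-(s - u)) * v u = Real.exp (-s) * (Real.exp u * v u)
    rw [show -(s - u) = -s + u by ring, Real.exp_add]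
    ring
  have hwe : ∀ s, lconv (fun r => Real.exp (-r)) y s = w s := by
    intro s; rw [hconv]
  -- integrability of y'
  haveI : IsFiniteMeasure (volume.restrict (Set.Ioc (0:ℝ) t)) := by
    constructor
    rw [Measure.restrict_apply_univ]
    exact measure_Ioc_lt_top
  have hy'int : IntegrableOn y' (Set.Ioc 0 t) volume := (hy'2 t ht).integrable one_le_two
  have hy'ii : ∀ s ∈ Set.Icc (0:ℝ) t, IntervalIntegrable y' volume 0 s := by
    intro s hs
    rw [intervalIntegrable_iff_integrableOn_Ioc_of_le hs.1]
    exact hy'int.mono_set (Set.Ioc_subset_Ioc_right hs.2)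
  -- identity: lconv e y' = z on [0,t]
  have hze : ∀ s ∈ Set.Icc (0:ℝ) t, lconv (fun r => Real.exp (-r)) y' s = z s := by
    intro s hs
    rw [hconv]
    have hey' : IntervalIntegrable (fun u => Real.exp u * y' u) volume 0 s :=
      (hy'ii s hs).continuousOn_mul Real.continuous_exp.continuousOn
    have hparts := intervalIntegral.integral_mul_deriv_eq_deriv_mul
      (u := Real.exp) (u' := Real.exp) (v := y) (v' := y')
      (fun x _ => Real.hasDerivAt_exp x) (fun x _ => hy x)
      (Real.continuous_exp.intervalIntegrable 0 s)
      (hy'ii s hs)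
    rw [hparts]
    have he : Real.exp (-s) * Real.exp s = 1 := by rw [← Real.exp_add]; simp
    simp only [hz_def, hw_def, hF_def, Real.exp_zero, one_mul]
    linear_combination (y s) * he
  -- FTC facts
  have hwy_ii : IntervalIntegrable (fun s => w s * (y s - w s)) volume 0 t :=
    (hwcont.mul (hycont.sub hwcont)).intervalIntegrable 0 t
  have hP : (∫ s in (0:ℝ)..t, w s * (y s - w s)) = w t ^ 2 / 2 := by
    have h2 := intervalIntegral.integral_eq_sub_of_hasDerivAt
      (f := fun s => w s * w s / 2) (f' := fun s => w s * (y s - w s))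
      (fun s _ => by
        have h := ((hw s).mul (hw s)).div_const 2
        refine h.congr_deriv ?_
        ring)
      hwy_ii
    rw [h2]
    show w t * w t / 2 - w 0 * w 0 / 2 = w t ^ 2 / 2
    rw [hw0]; ring
  have hzy'_ii : IntervalIntegrable (fun s => z s * y' s) volume 0 t :=
    (hy'ii t ⟨le_of_lt ht, le_refl t⟩).continuousOn_mul hzcont.continuousOn
  have hzz_ii : IntervalIntegrable (fun s => z s * z s) volume 0 t :=
    (hzcont.mul hzcont).intervalIntegrable 0 t
  have hQii : IntervalIntegrable (fun s => z s * (y' s - z s)) volume 0 t := by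
    have h := hzy'_ii.sub hzz_ii
    simpa [mul_sub] using h
  have hQ : (∫ s in (0:ℝ)..t, z s * (y' s - z s)) = z t ^ 2 / 2 := by
    have h2 := intervalIntegral.integral_eq_sub_of_hasDerivAt
      (f := fun s => z s * z s / 2) (f' := fun s => z s * (y' s - z s))
      (fun s _ => by
        have h := ((hz s).mul (hz s)).div_const 2
        refine h.congr_deriv ?_
        ring)
      hQii
    rw [h2]
    show z t * z t / 2 - z 0 * z 0 / 2 = z t ^ 2 / 2
    rw [hz0]; ring
  -- the exponential tail integral
  have hEcont : Continuous (fun s : ℝ => (Real.exp (-s) * y 0) ^ 2) := by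
    apply Continuous.pow
    exact (Real.continuous_exp.comp continuous_neg).mul continuous_const
  have hC : (∫ s in (0:ℝ)..t, (Real.exp (-s) * y 0) ^ 2) ≤ y 0 ^ 2 / 2 := by
    have hd : ∀ s ∈ Set.uIcc (0:ℝ) t, HasDerivAt
        (fun s => -(Real.exp (-(2 * s))) / 2 * y 0 ^ 2) ((Real.exp (-s) * y 0) ^ 2) s := by
      intro s _
      have h1 : HasDerivAt (fun s : ℝ => -(2 * s)) (-2) s := by
        simpa using ((hasDerivAt_id s).const_mul (-2 : ℝ))
      have h2 := (Real.hasDerivAt_exp (-(2 * s))).comp s h1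
      have h3 := ((h2.neg).div_const 2).mul_const (y 0 ^ 2)
      refine h3.congr_deriv ?_
      rw [show -(2 * s) = -s + -s by ring, Real.exp_add]
      ring
    have h2 := intervalIntegral.integral_eq_sub_of_hasDerivAt hd
      (hEcont.intervalIntegrable 0 t)
    rw [h2]
    show -(Real.exp (-(2*t))) / 2 * y 0 ^ 2 - -(Real.exp (-(2*0))) / 2 * y 0 ^ 2 ≤ y 0 ^ 2 / 2
    nlinarith [Real.exp_pos (-(2 * t)), Real.exp_pos (-(2 * 0)), Real.exp_zero,
      sq_nonneg (y 0)]
  -- rewrite the two strong-positivity integrals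
  have hIeY : (∫ s in (0:ℝ)..t, lconv (fun r => Real.exp (-r)) y s * y s)
      = w t ^ 2 / 2 + ∫ s in (0:ℝ)..t, w s * w s := by
    have h1 : (∫ s in (0:ℝ)..t, lconv (fun r => Real.exp (-r)) y s * y s)
        = ∫ s in (0:ℝ)..t, (w s * (y s - w s) + w s * w s) := by
      apply intervalIntegral.integral_congr
      intro s _
      show lconv (fun r => Real.exp (-r)) y s * y s = w s * (y s - w s) + w s * w s
      rw [hwe s]; ring
    rw [h1, intervalIntegral.integral_add (g := fun s => w s * w s) hwy_ii
      ((hwcont.mul hwcont).intervalIntegrable 0 t), hP]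
  have hIeY' : (∫ s in (0:ℝ)..t, lconv (fun r => Real.exp (-r)) y' s * y' s)
      = z t ^ 2 / 2 + ∫ s in (0:ℝ)..t, z s * z s := by
    have h1 : (∫ s in (0:ℝ)..t, lconv (fun r => Real.exp (-r)) y' s * y' s)
        = ∫ s in (0:ℝ)..t, (z s * (y' s - z s) + z s * z s) := by
      apply intervalIntegral.integral_congr
      intro s hs
      rw [Set.uIcc_of_le (le_of_lt ht)] at hs
      show lconv (fun r => Real.exp (-r)) y' s * y' s = z s * (y' s - z s) + z s * z s
      rw [hze s hs]; ring
    rw [h1, intervalIntegral.integral_add hQii hzz_ii, hQ]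
  -- the strong positivity estimates
  have hS1 := hstrong y t ht
  have hS2 := hstrong y' t ht
  rw [hIeY] at hS1
  rw [hIeY'] at hS2
  -- pointwise bound on y²
  have hmain : (∫ s in (0:ℝ)..t, y s ^ 2)
      ≤ (∫ s in (0:ℝ)..t, (w s * w s + 2 * (z s * z s)
          + 2 * (Real.exp (-s) * y 0) ^ 2 + 2 * (w s * (y s - w s)))) := by
    apply intervalIntegral.integral_mono_on (le_of_lt ht)
    · exact (hycont.pow 2).intervalIntegrable 0 t
    · apply Continuous.intervalIntegrable
      exact ((hwcont.mul hwcont).add (continuous_const.mul (hzcont.mul hzcont))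
        |>.add (continuous_const.mul hEcont)).add (continuous_const.mul (hwcont.mul (hycont.sub hwcont)))
    · intro s _
      have hyeq : y s = w s + z s + Real.exp (-s) * y 0 := by
        simp only [hz_def]; ring
      rw [hyeq]
      nlinarith [sq_nonneg (z s - Real.exp (-s) * y 0)]
  have hsplit : (∫ s in (0:ℝ)..t, (w s * w s + 2 * (z s * z s)
          + 2 * (Real.exp (-s) * y 0) ^ 2 + 2 * (w s * (y s - w s))))
      = (∫ s in (0:ℝ)..t, w s * w s) + 2 * (∫ s in (0:ℝ)..t, z s * z s)
        + 2 * (∫ s in (0:ℝ)..t, (Real.exp (-s) * y 0) ^ 2) + 2 * (w t ^ 2 / 2) := by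
    rw [← hP]
    have i1 : IntervalIntegrable (fun s => w s * w s) volume 0 t :=
      (hwcont.mul hwcont).intervalIntegrable 0 t
    have i3 : IntervalIntegrable (fun s => (Real.exp (-s) * y 0) ^ 2) volume 0 t :=
      hEcont.intervalIntegrable 0 t
    rw [intervalIntegral.integral_add ((i1.add (hzz_ii.const_mul 2)).add (i3.const_mul 2))
          (hwy_ii.const_mul 2),
        intervalIntegral.integral_add (i1.add (hzz_ii.const_mul 2)) (i3.const_mul 2),
        intervalIntegral.integral_add i1 (hzz_ii.const_mul 2),
        intervalIntegral.integral_const_mul, intervalIntegral.integral_const_mul,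
        intervalIntegral.integral_const_mul]
  -- nonnegativity
  have hA : (0:ℝ) ≤ ∫ s in (0:ℝ)..t, w s * w s := by
    apply intervalIntegral.integral_nonneg (le_of_lt ht)
    intro s _; nlinarith [sq_nonneg (w s)]
  have hB : (0:ℝ) ≤ ∫ s in (0:ℝ)..t, z s * z s := by
    apply intervalIntegral.integral_nonneg (le_of_lt ht)
    intro s _; nlinarith [sq_nonneg (z s)]
  -- finish
  have hS1' : w t ^ 2 / 2 + (∫ s in (0:ℝ)..t, w s * w s)
      ≤ η⁻¹ * ∫ s in (0:ℝ)..t, lconv K y s * y s := by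
    rw [le_inv_mul_iff₀ hη]; linarith
  have hS2' : z t ^ 2 / 2 + (∫ s in (0:ℝ)..t, z s * z s)
      ≤ η⁻¹ * ∫ s in (0:ℝ)..t, lconv K y' s * y' s := by
    rw [le_inv_mul_iff₀ hη]; linarith
  have hwt : (0:ℝ) ≤ w t ^ 2 / 2 := by positivity
  have hzt : (0:ℝ) ≤ z t ^ 2 / 2 := by positivity
  calc (∫ s in (0:ℝ)..t, y s ^ 2)
      ≤ (∫ s in (0:ℝ)..t, w s * w s) + 2 * (∫ s in (0:ℝ)..t, z s * z s)
        + 2 * (∫ s in (0:ℝ)..t, (Real.exp (-s) * y 0) ^ 2) + 2 * (w t ^ 2 / 2) := by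
        rw [← hsplit]; exact hmain
    _ ≤ y 0 ^ 2 + 2 * (w t ^ 2 / 2 + (∫ s in (0:ℝ)..t, w s * w s))
        + 2 * (z t ^ 2 / 2 + (∫ s in (0:ℝ)..t, z s * z s)) := by linarith
    _ ≤ y 0 ^ 2 + 2 * (η⁻¹ * ∫ s in (0:ℝ)..t, lconv K y s * y s)
        + 2 * (η⁻¹ * ∫ s in (0:ℝ)..t, lconv K y' s * y' s) := by linarith
    _ = y 0 ^ 2 + 2 * η⁻¹ * (∫ s in (0:ℝ)..t, lconv K y s * y s)
        + 2 * η⁻¹ * (∫ s in (0:ℝ)..t, lconv K y' s * y' s) := by ring
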